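/- arXiv:2303.01039 — 2 statements merged into one kernel-verified Lean document; each statement's English description precedes it below -/
import Mathlib

section
/- Let M be the submonoid of (ℚ, +) generated by {1/p : p prime}, and let q be a prime. Then every subring of the monoid algebra 𝔽_q[M] satisfies the ACCP; in particular, 𝔽_q[M] is an integral domain satisfying the ACCP. -/
/-- A commutative ring (intended: an integral domain) is atomic if every nonzero nonunit
is a finite product of irreducible elements. -/
def AtomicDomain (A : Type*) [CommRing A] : Prop :=
  ∀ a : A, a ≠ 0 → ¬ IsUnit a → ∃ l : Multiset A, (∀ x ∈ l, Irreducible x) ∧ l.prod = a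

/-- A commutative ring satisfies the ACCP if every ascending chain of principal ideals
stabilizes. -/
def RingACCP (A : Type*) [CommRing A] : Prop :=
  ∀ f : ℕ → A, (∀ n, Ideal.span {f n} ≤ Ideal.span {f (n + 1)}) →
    ∃ N, ∀ n, N ≤ n → Ideal.span {f n} = Ideal.span {f N}

/-- The submonoid of `(ℚ, +)` generated by the reciprocals `1/p` of all primes `p`. -/
def primeReciprocalsMonoid : AddSubmonoid ℚ :=
  AddSubmonoid.closure {x : ℚ | ∃ p : ℕ, p.Prime ∧ x = 1 / (p : ℚ)}

namespace PRM


def res (p : ℕ) (x : ℚ) : ZMod p := (x.num : ZMod p) * (x.den : ZMod p)⁻¹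

lemma den_div_dvd (a : ℤ) (b : ℤ) : (((a : ℚ) / (b : ℚ)).den : ℤ) ∣ b := by
  rw [← Rat.divInt_eq_div]; exact Rat.den_dvd a b

lemma den_div_dvd_nat (a : ℤ) (b : ℕ) : ((a : ℚ) / (b : ℚ)).den ∣ b := by
  have := den_div_dvd a b
  exact_mod_cast this

section P
variable {p : ℕ} [hp : Fact p.Prime]

instance : NeZero p := ⟨hp.out.ne_zero⟩

lemma res_eq (x : ℚ) (a b : ℤ) (hb : ¬ (p:ℤ) ∣ b) (hx : x = (a : ℚ) / b) :
    res p x = (a : ZMod p) * (b : ZMod p)⁻¹ := by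
  have hb0 : (b : ℚ) ≠ 0 := by
    rintro h; apply hb; norm_cast at h; simp [h]
  have hden : ((x.den : ℤ)) ∣ b := hx ▸ den_div_dvd a b
  have hpden : ¬ (p : ℤ) ∣ (x.den : ℤ) := fun h => hb (h.trans hden)
  have key : a * (x.den : ℤ) = x.num * b := by
    have h1 : (a : ℚ) = x * b := by rw [hx]; field_simp
    have h2 : (a : ℚ) * x.den = x.num * b := by
      calc (a:ℚ) * x.den = (x * x.den) * b := by rw [h1]; ring
      _ = x.num * b := by rw [Rat.mul_den_eq_num]
    exact_mod_cast h2
  have hbz : (b : ZMod p) ≠ 0 := by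
    rw [Ne, ZMod.intCast_zmod_eq_zero_iff_dvd]; exact hb
  have hdz : ((x.den : ℕ) : ZMod p) ≠ 0 := by
    rw [Ne, ZMod.natCast_eq_zero_iff]
    intro h; exact hpden (Int.natCast_dvd_natCast.mpr h)
  have key2 : (a : ZMod p) * ((x.den : ℕ) : ZMod p) = (x.num : ZMod p) * (b : ZMod p) := by
    have := congrArg (Int.cast : ℤ → ZMod p) key
    push_cast at this ⊢; exact this
  show (x.num : ZMod p) * (↑x.den)⁻¹ = ↑a * (↑b)⁻¹
  rw [mul_comm, mul_comm (a : ZMod p), inv_mul_eq_div, inv_mul_eq_div,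
    div_eq_div_iff hdz hbz]
  linear_combination -key2

lemma res_add (x y : ℚ) (hx : ¬ p ∣ x.den) (hy : ¬ p ∣ y.den) :
    res p (x + y) = res p x + res p y := by
  have hdx : (x.den : ℚ) ≠ 0 := by exact_mod_cast x.den_nz
  have hdy : (y.den : ℚ) ≠ 0 := by exact_mod_cast y.den_nz
  have hb : ¬ (p:ℤ) ∣ (x.den : ℤ) * (y.den : ℤ) := by
    intro h
    rcases (Int.Prime.dvd_mul' hp.out h) with h | h
    · exact hx (by exact_mod_cast h)
    · exact hy (by exact_mod_cast h)
  have hxy : x + y = ((x.num * y.den + y.num * x.den : ℤ) : ℚ) / ((x.den : ℤ) * (y.den : ℤ) : ℤ) := by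
    push_cast
    conv_lhs => rw [← Rat.num_div_den x, ← Rat.num_div_den y]
    rw [div_add_div _ _ hdx hdy]
    ring_nf
  have := res_eq (x + y) _ _ hb hxy
  rw [this]
  have hxz : ((x.den : ℕ) : ZMod p) ≠ 0 := by
    rw [Ne, ZMod.natCast_eq_zero_iff]; exact hx
  have hyz : ((y.den : ℕ) : ZMod p) ≠ 0 := by
    rw [Ne, ZMod.natCast_eq_zero_iff]; exact hy
  show _ = (x.num : ZMod p) * (↑x.den)⁻¹ + (y.num : ZMod p) * (↑y.den)⁻¹
  push_cast
  field_simp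

/-- coefficient of 1/p in the canonical representation -/
def coef (p : ℕ) (x : ℚ) : ℕ := (res p ((p:ℚ) * x)).val

lemma coef_lt (x : ℚ) : coef p x < p := ZMod.val_lt _

lemma coef_cast (x : ℚ) : ((coef p x : ℕ) : ZMod p) = res p ((p:ℚ) * x) :=
  ZMod.natCast_rightInverse _

lemma coef_eq_zero (x : ℚ) (h : ¬ p ∣ x.den) : coef p x = 0 := by
  have hx : (p:ℚ) * x = ((p * x.num : ℤ) : ℚ) / ((x.den : ℤ) : ℚ) := by
    push_cast
    conv_lhs => rw [← Rat.num_div_den x]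
    field_simp
  have hb : ¬ (p:ℤ) ∣ (x.den : ℤ) := by exact_mod_cast h
  have := res_eq _ _ _ hb hx
  unfold coef
  rw [this]
  push_cast
  rw [ZMod.natCast_self]
  simp

lemma den_pmul_not_dvd (x : ℚ) (hx : Squarefree x.den) : ¬ p ∣ ((p:ℚ) * x).den := by
  by_cases h : p ∣ x.den
  · -- p*x = num / (den/p)
    have hdp : ((x.den / p : ℕ) : ℚ) * p = (x.den : ℚ) := by
      exact_mod_cast congrArg (Nat.cast : ℕ → ℚ) (Nat.div_mul_cancel h)
    have hd0 : (x.den : ℚ) ≠ 0 := by exact_mod_cast x.den_nz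
    have hdp0 : ((x.den / p : ℕ) : ℚ) ≠ 0 := by
      intro h0; rw [h0, zero_mul] at hdp; exact hd0 hdp.symm
    have hx2 : (p:ℚ) * x = (x.num : ℚ) / ((x.den / p : ℕ) : ℚ) := by
      rw [eq_div_iff hdp0]
      linear_combination x * hdp + Rat.mul_den_eq_num x
    have hdvd : ((p:ℚ) * x).den ∣ x.den / p := by
      have := den_div_dvd_nat x.num (x.den / p)
      rwa [← hx2] at this
    intro hpd
    have : p * p ∣ (x.den / p) * p := mul_dvd_mul (hpd.trans hdvd) dvd_rfl
    rw [Nat.div_mul_cancel h] at this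
    exact hp.out.not_isUnit (hx p this)
  · intro hpd
    apply h
    refine hpd.trans ?_
    have hd0 : (x.den : ℚ) ≠ 0 := by exact_mod_cast x.den_nz
    have hx2 : (p:ℚ) * x = ((p * x.num : ℤ) : ℚ) / ((x.den : ℕ) : ℚ) := by
      rw [eq_div_iff hd0]
      push_cast
      linear_combination (p:ℚ) * Rat.mul_den_eq_num x
    have := den_div_dvd_nat (p * x.num) x.den
    rwa [← hx2] at this

lemma den_add_dvd (x y : ℚ) : (x + y).den ∣ x.den * y.den := by
  have hdx : (x.den : ℚ) ≠ 0 := by exact_mod_cast x.den_nz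
  have hdy : (y.den : ℚ) ≠ 0 := by exact_mod_cast y.den_nz
  have hxy : x + y = ((x.num * y.den + y.num * x.den : ℤ) : ℚ) / ((x.den * y.den : ℕ) : ℚ) := by
    rw [eq_div_iff (by exact_mod_cast Nat.mul_ne_zero x.den_nz y.den_nz)]
    push_cast
    linear_combination (y.den:ℚ) * Rat.mul_den_eq_num x + (x.den:ℚ) * Rat.mul_den_eq_num y
  have := den_div_dvd_nat (x.num * y.den + y.num * x.den) (x.den * y.den)
  rwa [← hxy] at this

lemma not_dvd_den_add (x y : ℚ) (hx : ¬ p ∣ x.den) (hy : ¬ p ∣ y.den) :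
    ¬ p ∣ (x + y).den := by
  intro h
  rcases (Nat.Prime.dvd_mul hp.out).mp (h.trans (den_add_dvd x y)) with h | h
  exacts [hx h, hy h]

lemma den_pmul_dvd_of_sq (x : ℚ) (h : p * p ∣ x.den) : p ∣ ((p:ℚ) * x).den := by
  by_contra hB
  set B := ((p:ℚ) * x).den with hBdef
  have hp0 : (p : ℚ) ≠ 0 := by exact_mod_cast hp.out.ne_zero
  have hB0 : (B : ℚ) ≠ 0 := by exact_mod_cast ((p:ℚ) * x).den_nz
  have hx2 : x = ((((p:ℚ) * x).num : ℤ) : ℚ) / ((B * p : ℕ) : ℚ) := by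
    rw [eq_div_iff (by push_cast; exact mul_ne_zero hB0 hp0)]
    push_cast
    linear_combination Rat.mul_den_eq_num ((p:ℚ) * x)
  have hdvd : x.den ∣ B * p := by
    have := den_div_dvd_nat ((p:ℚ) * x).num (B * p)
    rwa [← hx2] at this
  have : p * p ∣ B * p := h.trans hdvd
  have : p ∣ B := (Nat.mul_dvd_mul_iff_right hp.out.pos).mp this
  exact hB this

end P

lemma sf_den_add (x y : ℚ) (hx : Squarefree x.den) (hy : Squarefree y.den) :
    Squarefree (x + y).den := by
  rw [Nat.squarefree_iff_prime_squarefree]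
  intro r hr hrr
  haveI : Fact r.Prime := ⟨hr⟩
  have h1 : r ∣ ((r:ℚ) * (x + y)).den := den_pmul_dvd_of_sq _ hrr
  rw [mul_add] at h1
  exact not_dvd_den_add _ _ (den_pmul_not_dvd x hx) (den_pmul_not_dvd y hy) h1


section P2
variable {p : ℕ} [hp : Fact p.Prime]

lemma coef_add (x y : ℚ) (hx : Squarefree x.den) (hy : Squarefree y.den) :
    ((coef p (x + y) : ℕ) : ZMod p) = (coef p x : ℕ) + (coef p y : ℕ) := by
  rw [coef_cast, coef_cast, coef_cast, mul_add]
  exact res_add _ _ (den_pmul_not_dvd x hx) (den_pmul_not_dvd y hy)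

lemma coef_carry (x y : ℚ) (hx : Squarefree x.den) (hy : Squarefree y.den) :
    coef p x + coef p y = coef p (x + y) ∨
      coef p x + coef p y = coef p (x + y) + p := by
  have h := coef_add (p := p) x y hx hy
  have hd : ((coef p x + coef p y - coef p (x + y) : ℤ) : ZMod p) = 0 := by
    push_cast
    rw [← h]
    ring
  rw [ZMod.intCast_zmod_eq_zero_iff_dvd] at hd
  obtain ⟨k, hk⟩ := hd
  have h1 : coef p x < p := coef_lt x
  have h2 : coef p y < p := coef_lt y
  have h3 : coef p (x + y) < p := coef_lt (x + y)
  have hp1 : 0 < (p:ℤ) := by exact_mod_cast hp.out.pos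
  have hk0 : k = 0 ∨ k = 1 := by
    rcases lt_trichotomy k 0 with h | h | h
    · exfalso; nlinarith [hk, h1, h2, h3]
    · left; exact h
    · right; nlinarith [hk, h1, h2, h3]
  rcases hk0 with rfl | rfl
  · left; omega
  · right; omega

end P2

/-- the fractional part over a given finite set of primes -/
def frcOn (T : Finset ℕ) (x : ℚ) : ℚ := ∑ r ∈ T, (coef r x : ℚ) / r

def frc (x : ℚ) : ℚ := frcOn x.den.primeFactors x

def ipart (x : ℚ) : ℚ := x - frc x

def wtOn (T : Finset ℕ) (x : ℚ) : ℕ := ∑ r ∈ T, coef r x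

def wt (x : ℚ) : ℕ := wtOn x.den.primeFactors x

lemma frcOn_eq (T : Finset ℕ) (x : ℚ) (hT : x.den.primeFactors ⊆ T)
    (hpr : ∀ r ∈ T, r.Prime) : frcOn T x = frc x := by
  refine (Finset.sum_subset hT fun r hr hnr => ?_).symm
  haveI : Fact r.Prime := ⟨hpr r hr⟩
  have : ¬ r ∣ x.den := fun hdvd => hnr (Nat.mem_primeFactors.mpr ⟨hpr r hr, hdvd, x.den_nz⟩)
  rw [coef_eq_zero x this]
  simp

lemma wtOn_eq (T : Finset ℕ) (x : ℚ) (hT : x.den.primeFactors ⊆ T)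
    (hpr : ∀ r ∈ T, r.Prime) : wtOn T x = wt x := by
  refine (Finset.sum_subset hT fun r hr hnr => ?_).symm
  haveI : Fact r.Prime := ⟨hpr r hr⟩
  have : ¬ r ∣ x.den := fun hdvd => hnr (Nat.mem_primeFactors.mpr ⟨hpr r hr, hdvd, x.den_nz⟩)
  rw [coef_eq_zero x this]

lemma ipart_add (x y : ℚ) (hx : Squarefree x.den) (hy : Squarefree y.den) :
    ∃ C : ℕ, ipart (x + y) = ipart x + ipart y + C ∧
      (C = 0 → wt (x + y) = wt x + wt y) := by
  classical
  set T : Finset ℕ := x.den.primeFactors ∪ y.den.primeFactors ∪ (x + y).den.primeFactors with hT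
  have hpr : ∀ r ∈ T, r.Prime := by
    intro r hr
    simp only [hT, Finset.mem_union] at hr
    rcases hr with (h | h) | h <;> exact (Nat.mem_primeFactors.mp h).1
  have hTx : x.den.primeFactors ⊆ T := by intro r hr; simp [hT, hr]
  have hTy : y.den.primeFactors ⊆ T := by intro r hr; simp [hT, hr]
  have hTxy : (x + y).den.primeFactors ⊆ T := by intro r hr; simp [hT, hr]
  set c : ℕ → ℕ := fun r => if coef r x + coef r y = coef r (x + y) then 0 else 1 with hc
  have hpt : ∀ r ∈ T, coef r x + coef r y = coef r (x + y) + c r * r := by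
    intro r hr
    haveI : Fact r.Prime := ⟨hpr r hr⟩
    rcases coef_carry (p := r) x y hx hy with h | h
    · simp [hc, h]
    · have hne : ¬ (coef r x + coef r y = coef r (x + y)) := by
        intro he; rw [he] at h; have := (hpr r hr).pos; omega
      rw [hc]; simp only [hne, if_false]; omega
  refine ⟨∑ r ∈ T, c r, ?_, ?_⟩
  · have key : frcOn T x + frcOn T y = frcOn T (x + y) + (∑ r ∈ T, c r : ℕ) := by
      unfold frcOn
      push_cast
      rw [← Finset.sum_add_distrib, ← Finset.sum_add_distrib]
      refine Finset.sum_congr rfl fun r hr => ?_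
      have hr0 : (r : ℚ) ≠ 0 := by exact_mod_cast (hpr r hr).ne_zero
      have := hpt r hr
      have hq : ((coef r x : ℚ)) + coef r y = coef r (x + y) + c r * r := by exact_mod_cast this
      field_simp
      linear_combination hq
    unfold ipart
    rw [← frcOn_eq T x hTx hpr, ← frcOn_eq T y hTy hpr, ← frcOn_eq T (x + y) hTxy hpr]
    linear_combination key
  · intro hC
    have hc0 : ∀ r ∈ T, c r = 0 := by
      intro r hr
      exact (Finset.sum_eq_zero_iff.mp hC) r hr
    have : wtOn T (x + y) = wtOn T x + wtOn T y := by
      unfold wtOn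
      rw [← Finset.sum_add_distrib]
      refine Finset.sum_congr rfl fun r hr => ?_
      have := hpt r hr
      rw [hc0 r hr] at this
      omega
    rw [← wtOn_eq T _ hTxy hpr, ← wtOn_eq T _ hTx hpr, ← wtOn_eq T _ hTy hpr, this]


/-- canonical "good" rationals: squarefree denominator and nonnegative integer part -/
def Good (x : ℚ) : Prop := Squarefree x.den ∧ ∃ n : ℕ, ipart x = (n : ℚ)

lemma good_zero : Good 0 := by
  constructor
  · rw [Rat.den_zero]; exact squarefree_one
  · refine ⟨0, ?_⟩
    unfold ipart frc frcOn
    rw [Rat.den_zero]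
    simp

lemma den_one_div_prime {p : ℕ} (hp : p.Prime) : ((1 : ℚ)/p).den = p := by
  rw [one_div]; exact Rat.inv_natCast_den_of_pos hp.pos

lemma coef_one_div (p : ℕ) [hp : Fact p.Prime] : coef p ((1:ℚ)/p) = 1 := by
  have hp0 : (p:ℚ) ≠ 0 := by exact_mod_cast hp.out.ne_zero
  have h1 : (p:ℚ) * ((1:ℚ)/p) = 1 := by field_simp
  have h2 : res p (1:ℚ) = 1 := by unfold res; norm_num
  unfold coef
  rw [h1, h2]
  haveI : Fact (1 < p) := ⟨hp.out.one_lt⟩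
  exact ZMod.val_one p

lemma good_gen {p : ℕ} (hp : p.Prime) : Good ((1:ℚ)/p) := by
  haveI := Fact.mk hp
  have hd : ((1:ℚ)/p).den = p := den_one_div_prime hp
  have hp0 : (p:ℚ) ≠ 0 := by exact_mod_cast hp.ne_zero
  refine ⟨by rw [hd]; exact hp.prime.squarefree, 0, ?_⟩
  unfold ipart frc frcOn
  rw [hd, hp.primeFactors, Finset.sum_singleton, coef_one_div]
  push_cast
  field_simp
  simp

lemma good_add {x y : ℚ} (hx : Good x) (hy : Good y) : Good (x + y) := by
  obtain ⟨C, hC, -⟩ := ipart_add x y hx.1 hy.1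
  obtain ⟨nx, hnx⟩ := hx.2
  obtain ⟨ny, hny⟩ := hy.2
  refine ⟨sf_den_add x y hx.1 hy.1, nx + ny + C, ?_⟩
  rw [hC, hnx, hny]; push_cast; ring

def inat (x : ℚ) : ℕ := (ipart x).num.toNat

lemma inat_eq {x : ℚ} (h : Good x) : (inat x : ℚ) = ipart x := by
  obtain ⟨n, hn⟩ := h.2
  unfold inat
  rw [hn]
  norm_num

lemma eq_zero_of_good {x : ℚ} (h1 : ipart x = 0) (h2 : wt x = 0) : x = 0 := by
  have hfrc : frc x = 0 := by
    unfold frc frcOn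
    apply Finset.sum_eq_zero
    intro r hr
    have hw : ∑ s ∈ x.den.primeFactors, coef s x = 0 := h2
    have : coef r x = 0 := (Finset.sum_eq_zero_iff.mp hw) r hr
    simp [this]
  have : x = ipart x + frc x := by unfold ipart; ring
  rw [this, h1, hfrc, add_zero]

lemma good_lt {x e : ℚ} (hx : Good x) (he : Good e) (hne : e ≠ 0) :
    inat x < inat (x + e) ∨ (inat (x + e) = inat x ∧ wt x < wt (x + e)) := by
  obtain ⟨C, hC, hCw⟩ := ipart_add x e hx.1 he.1
  obtain ⟨mE, hmE⟩ := he.2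
  obtain ⟨mX, hmX⟩ := hx.2
  have hxe : Good (x + e) := good_add hx he
  have h1 : (inat (x + e) : ℚ) = ((mX + mE + C : ℕ) : ℚ) := by
    rw [inat_eq hxe, hC, hmX, hmE]; push_cast; ring
  have h3 : inat (x + e) = mX + mE + C := by exact_mod_cast h1
  have h2 : inat x = mX := by
    have : (inat x : ℚ) = (mX : ℚ) := by rw [inat_eq hx, hmX]
    exact_mod_cast this
  by_cases h0 : mE = 0 ∧ C = 0
  · right
    obtain ⟨h0e, h0c⟩ := h0
    refine ⟨by omega, ?_⟩
    have hw : wt (x + e) = wt x + wt e := hCw h0c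
    have hwe : wt e ≠ 0 := by
      intro hw0
      exact hne (eq_zero_of_good (by rw [hmE, h0e]; norm_num) hw0)
    omega
  · left; omega

lemma nat_eventually_const (f : ℕ → ℕ) (hf : ∀ n, f (n + 1) ≤ f n) :
    ∃ N, ∀ n, N ≤ n → f n = f N := by
  have anti : ∀ a b, a ≤ b → f b ≤ f a := by
    intro a b hab
    induction hab with
    | refl => exact le_rfl
    | step _ ih => exact le_trans (hf _) ih
  have hS : (Set.range f).Nonempty := ⟨f 0, 0, rfl⟩
  obtain ⟨N, hN⟩ := Nat.sInf_mem hS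
  exact ⟨N, fun n hn => le_antisymm (anti N n hn) (hN ▸ Nat.sInf_le ⟨n, rfl⟩)⟩

lemma good_chain (m e : ℕ → ℚ) (hm : ∀ n, Good (m n)) (he : ∀ n, Good (e n))
    (h : ∀ n, m n = m (n + 1) + e n) : ∃ N, ∀ n, N ≤ n → e n = 0 := by
  have mono1 : ∀ n, inat (m (n + 1)) ≤ inat (m n) := by
    intro n
    by_cases h0 : e n = 0
    · have : m (n + 1) = m n := by rw [h n, h0, add_zero]
      rw [this]
    · rcases good_lt (hm (n + 1)) (he n) h0 with hlt | ⟨heq, -⟩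
      · rw [← h n] at hlt; exact hlt.le
      · rw [← h n] at heq; exact heq.ge
  obtain ⟨N1, hN1⟩ := nat_eventually_const (fun n => inat (m n)) mono1
  have mono2 : ∀ k, wt (m (N1 + (k + 1))) ≤ wt (m (N1 + k)) := by
    intro k
    set n := N1 + k with hn
    have hrw : N1 + (k + 1) = n + 1 := by omega
    rw [hrw]
    by_cases h0 : e n = 0
    · have : m (n + 1) = m n := by rw [h n, h0, add_zero]
      rw [this]
    · rcases good_lt (hm (n + 1)) (he n) h0 with hlt | ⟨-, hwlt⟩
      · exfalso
        rw [← h n] at hlt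
        have e1 : inat (m n) = inat (m N1) := hN1 n (by omega)
        have e2 : inat (m (n + 1)) = inat (m N1) := hN1 (n + 1) (by omega)
        omega
      · rw [← h n] at hwlt; exact hwlt.le
  obtain ⟨N2, hN2⟩ := nat_eventually_const (fun k => wt (m (N1 + k))) mono2
  refine ⟨N1 + N2, fun n hn => ?_⟩
  by_contra h0
  rcases good_lt (hm (n + 1)) (he n) h0 with hlt | ⟨-, hwlt⟩
  · rw [← h n] at hlt
    have e1 : inat (m n) = inat (m N1) := hN1 n (by omega)
    have e2 : inat (m (n + 1)) = inat (m N1) := hN1 (n + 1) (by omega)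
    omega
  · rw [← h n] at hwlt
    obtain ⟨k, hk⟩ : ∃ k, n = N1 + k := ⟨n - N1, by omega⟩
    have e1 : wt (m n) = wt (m (N1 + N2)) := by rw [hk]; exact hN2 k (by omega)
    have e2 : wt (m (n + 1)) = wt (m (N1 + N2)) := by
      have hidx : n + 1 = N1 + (k + 1) := by omega
      rw [hidx]; exact hN2 (k + 1) (by omega)
    omega



lemma good_mem {x : ℚ} (h : x ∈ primeReciprocalsMonoid) : Good x := by
  induction h using AddSubmonoid.closure_induction with
  | mem y hy => obtain ⟨p, hp, rfl⟩ := hy; exact good_gen hp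
  | zero => exact good_zero
  | add a b ha hb hia hib => exact good_add hia hib


lemma mem_nonneg {x : ℚ} (h : x ∈ primeReciprocalsMonoid) : 0 ≤ x := by
  induction h using AddSubmonoid.closure_induction with
  | mem y hy => obtain ⟨p, hp, rfl⟩ := hy; positivity
  | zero => exact le_rfl
  | add a b ha hb hia hib => exact add_nonneg hia hib

abbrev Mr := ↥primeReciprocalsMonoid

noncomputable instance : OrderBot Mr where
  bot := 0
  bot_le m := by
    have : ((0 : Mr) : ℚ) ≤ (m : ℚ) := by
      rw [ZeroMemClass.coe_zero]; exact mem_nonneg m.2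
    exact_mod_cast this


section RingPart
variable {q : ℕ} [hq : Fact q.Prime]

noncomputable abbrev Rq (q : ℕ) := AddMonoidAlgebra (ZMod q) Mr

noncomputable def deg (f : Rq q) : Mr := AddMonoidAlgebra.supDegree id f

lemma deg_mul (f g : Rq q) (hf : f ≠ 0) (hg : g ≠ 0) :
    deg (f * g) = deg f + deg g := by
  apply AddMonoidAlgebra.supDegree_mul Function.injective_id (fun _ _ => rfl) _ hf hg
  apply mul_ne_zero
  · exact fun h => hf ((AddMonoidAlgebra.leadingCoeff_eq_zero Function.injective_id).mp h)
  · exact fun h => hg ((AddMonoidAlgebra.leadingCoeff_eq_zero Function.injective_id).mp h)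

lemma deg_eq_zero {f : Rq q} (hf : f ≠ 0) (h : deg f = 0) :
    ∃ c : ZMod q, c ≠ 0 ∧ f = AddMonoidAlgebra.single 0 c := by
  have hsupp : f.coeff.support ⊆ {0} := by
    intro a ha
    have h1 : a ≤ deg f := Finset.le_sup (f := id) ha
    have h2 : (0 : Mr) ≤ a := bot_le (a := a)
    rw [Finset.mem_singleton]
    exact le_antisymm (h ▸ h1) h2
  refine ⟨f.coeff 0, fun h0 => ?_, ?_⟩
  · apply hf
    ext a
    by_cases ha : a = 0
    · rw [ha]; exact h0
    · by_contra hne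
      have : a ∈ f.coeff.support := Finsupp.mem_support_iff.mpr (by simpa using hne)
      exact ha (Finset.mem_singleton.mp (hsupp this))
  · exact AddMonoidAlgebra.ext (Finsupp.eq_single_iff.mpr ⟨hsupp, rfl⟩)

lemma key (F G : ℕ → Rq q) (h : ∀ n, F n = F (n + 1) * G n) :
    (∀ n, F n = 0) ∨
      ∃ N, ∀ n, N ≤ n → F n ≠ 0 ∧ ∃ c : ZMod q, c ≠ 0 ∧ G n = AddMonoidAlgebra.single 0 c := by
  by_cases h0 : ∀ n, F n = 0
  · exact Or.inl h0
  right
  push_neg at h0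
  obtain ⟨k, hk⟩ := h0
  have hnz : ∀ n, k ≤ n → F n ≠ 0 := by
    intro n hn
    induction hn with
    | refl => exact hk
    | @step m _ ih => exact fun h1 => ih (by rw [h m, h1, zero_mul])
  have hGnz : ∀ n, k ≤ n → G n ≠ 0 := by
    intro n hn h1
    exact hnz n hn (by rw [h n, h1, mul_zero])
  set m : ℕ → ℚ := fun n => ((deg (F (n + k)) : Mr) : ℚ) with hm_def
  set e : ℕ → ℚ := fun n => ((deg (G (n + k)) : Mr) : ℚ) with he_def
  have hchain : ∀ n, m n = m (n + 1) + e n := by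
    intro n
    have hidx : n + 1 + k = n + k + 1 := by omega
    have h1 : deg (F (n + k)) = deg (F (n + k + 1)) + deg (G (n + k)) := by
      have h2 := deg_mul (F (n + k + 1)) (G (n + k)) (hnz _ (by omega)) (hGnz _ (by omega))
      rw [← h (n + k)] at h2
      exact h2
    simp only [hm_def, he_def, hidx]
    exact_mod_cast congrArg (fun z : Mr => (z : ℚ)) h1
  have hmg : ∀ n, Good (m n) := fun n => good_mem (deg (F (n + k))).2
  have heg : ∀ n, Good (e n) := fun n => good_mem (deg (G (n + k))).2
  obtain ⟨N', hN'⟩ := good_chain m e hmg heg hchain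
  refine ⟨N' + k, fun n hn => ⟨hnz n (by omega), ?_⟩⟩
  have he0 : e (n - k) = 0 := hN' (n - k) (by omega)
  have hidx : n - k + k = n := by omega
  rw [he_def] at he0
  simp only [hidx] at he0
  have hdeg0 : deg (G n) = 0 := by
    have : ((deg (G n) : Mr) : ℚ) = ((0 : Mr) : ℚ) := by rw [ZeroMemClass.coe_zero]; exact he0
    exact Subtype.coe_injective this
  exact deg_eq_zero (hGnz n (by omega)) hdeg0


lemma span_step {A : Type*} [CommRing A] {a b u : A} (hu : IsUnit u) (hab : a = b * u) :
    Ideal.span {a} = Ideal.span {b} := by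
  apply le_antisymm
  · exact Ideal.span_singleton_le_span_singleton.mpr ⟨u, hab⟩
  · apply Ideal.span_singleton_le_span_singleton.mpr
    obtain ⟨v, hv⟩ := hu.exists_right_inv
    exact ⟨v, by rw [hab, mul_assoc, hv, mul_one]⟩

lemma span_tail {A : Type*} [CommRing A] (f g : ℕ → A) (hg : ∀ n, f n = f (n + 1) * g n)
    (N : ℕ) (hu : ∀ m, N ≤ m → IsUnit (g m)) :
    ∀ n, N ≤ n → Ideal.span {f n} = Ideal.span {f N} := by
  intro n hn
  induction hn with
  | refl => rfl
  | @step m hm ih =>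
    have h1 : Ideal.span {f m} = Ideal.span {f (m + 1)} := span_step (hu m hm) (hg m)
    rw [← h1]
    exact ih

lemma single_unit_pow {c : ZMod q} (hc : c ≠ 0) {x : Rq q}
    (hx : x = AddMonoidAlgebra.single 0 c) : x ^ (q - 1) = 1 := by
  have hx' : x = AddMonoidAlgebra.single (0 : Mr) c := hx
  rw [hx', AddMonoidAlgebra.single_pow, smul_zero, ZMod.pow_card_sub_one_eq_one hc]
  exact (AddMonoidAlgebra.one_def).symm

lemma subring_accp (S : Subring (Rq q)) : RingACCP S := by
  intro f hf
  have hdvd : ∀ n, f (n + 1) ∣ f n := fun n => Ideal.span_singleton_le_span_singleton.mp (hf n)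
  choose g hg using hdvd
  have hFG : ∀ n, ((f n : S) : Rq q) = ((f (n + 1) : S) : Rq q) * ((g n : S) : Rq q) := by
    intro n
    exact_mod_cast congrArg (Subtype.val) (hg n)
  rcases key (fun n => ((f n : S) : Rq q)) (fun n => ((g n : S) : Rq q)) hFG with hall | ⟨N, hN⟩
  · refine ⟨0, fun n hn => ?_⟩
    have h1 : f n = 0 := Subtype.ext (hall n)
    have h0 : f 0 = 0 := Subtype.ext (hall 0)
    rw [h1, h0]
  · refine ⟨N, fun n hn => span_tail f g hg N (fun m hm => ?_) n hn⟩
    obtain ⟨-, c, hc, hgm⟩ := hN m hm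
    apply IsUnit.of_pow_eq_one (n := q - 1) _ (by have := hq.out.two_le; omega)
    apply Subtype.coe_injective
    show ((g m ^ (q - 1) : S) : Rq q) = ((1 : S) : Rq q)
    have hpow : ((g m ^ (q - 1) : S) : Rq q) = ((g m : S) : Rq q) ^ (q - 1) := by push_cast; rfl
    rw [hpow, single_unit_pow hc hgm, OneMemClass.coe_one]

lemma ring_accp : RingACCP (Rq q) := by
  intro f hf
  have hdvd : ∀ n, f (n + 1) ∣ f n := fun n => Ideal.span_singleton_le_span_singleton.mp (hf n)
  choose g hg using hdvd
  rcases key f g hg with hall | ⟨N, hN⟩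
  · exact ⟨0, fun n hn => by rw [hall n, hall 0]⟩
  · refine ⟨N, fun n hn => span_tail f g hg N (fun m hm => ?_) n hn⟩
    obtain ⟨-, c, hc, hgm⟩ := hN m hm
    apply IsUnit.of_pow_eq_one (n := q - 1) _ (by have := hq.out.two_le; omega)
    exact single_unit_pow hc hgm

lemma rq_domain : IsDomain (Rq q) := NoZeroDivisors.to_isDomain _

end RingPart

end PRM

/-- If `M` is the submonoid of `(ℚ, +)` generated by `{1/p : p prime}` and
`q` is a prime, then every subring of the monoid algebra `𝔽_q[M]` satisfies the ACCP; in
particular `𝔽_q[M]` is an integral domain satisfying the ACCP. -/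
theorem prime_reciprocals_monoid_algebra_hereditary_ACCP (q : ℕ) (hq : q.Prime) :
    (∀ S : Subring (AddMonoidAlgebra (ZMod q) primeReciprocalsMonoid), RingACCP S) ∧
      IsDomain (AddMonoidAlgebra (ZMod q) primeReciprocalsMonoid) ∧
      RingACCP (AddMonoidAlgebra (ZMod q) primeReciprocalsMonoid) := by
  haveI : Fact q.Prime := ⟨hq⟩
  exact ⟨fun S => PRM.subring_accp S, PRM.rq_domain, PRM.ring_accp⟩
end

section
/- Let M be the submonoid of (ℚ, +) generated by {1/p : p prime}, let q be a prime, and let x denote the monomial of exponent 1 in the monoid algebra 𝔽_q[M]. Then the set of factorization lengths of x, i.e. the set of natural numbers n such that x is a product of n irreducible elements of 𝔽_q[M], equals the set of all primes; in particular, 𝔽_q[M] is not a bounded factorization domain. -/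
section NT

lemma count_dvd (s : Multiset ℕ) (hs : ∀ p ∈ s, p.Prime)
    (h : (s.map (fun p : ℕ => (p:ℚ)⁻¹)).sum = 1) {r : ℕ} (hr : r ∈ s.toFinset) :
    r ∣ s.count r := by
  classical
  have hrp : r.Prime := hs r (Multiset.mem_toFinset.mp hr)
  set S := s.toFinset with hS
  set N : ℕ := ∏ p ∈ S.erase r, p with hN
  have hcop : Nat.Coprime r N := by
    apply Nat.Coprime.prod_right
    intro p hp
    have hpS : p ∈ S := Finset.mem_of_mem_erase hp
    have hpne : p ≠ r := Finset.ne_of_mem_erase hp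
    exact (Nat.coprime_primes hrp (hs p (Multiset.mem_toFinset.mp hpS))).mpr hpne.symm
  have hsum : ∑ p ∈ S, (s.count p : ℚ) * (p:ℚ)⁻¹ = 1 := by
    have := Finset.sum_multiset_map_count s (fun p : ℕ => (p:ℚ)⁻¹)
    rw [this] at h
    simpa [nsmul_eq_mul] using h
  have hdvdN : ∀ p ∈ S.erase r, p ∣ N := fun p hp => Finset.dvd_prod_of_mem _ hp
  have hpos : ∀ p ∈ S, (0:ℚ) < p := by
    intro p hp
    exact_mod_cast (hs p (Multiset.mem_toFinset.mp hp)).pos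
  have hcast : ∀ p ∈ S.erase r, ((N / p : ℕ) : ℚ) = (N : ℚ) * (p:ℚ)⁻¹ := by
    intro p hp
    have hp0 : (p:ℚ) ≠ 0 := ne_of_gt (hpos p (Finset.mem_of_mem_erase hp))
    rw [Nat.cast_div (hdvdN p hp) hp0, div_eq_mul_inv]
  have hr0 : (r:ℚ) ≠ 0 := ne_of_gt (hpos r hr)
  have e1 : ∑ p ∈ S, (s.count p : ℚ) * (p:ℚ)⁻¹ * ((N:ℚ) * r) = (N:ℚ) * r := by
    rw [← Finset.sum_mul, hsum, one_mul]
  have e2 : ∑ p ∈ S, (s.count p : ℚ) * (p:ℚ)⁻¹ * ((N:ℚ) * r)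
      = (s.count r : ℚ) * N + r * ∑ p ∈ S.erase r, (s.count p : ℚ) * ((N / p : ℕ) : ℚ) := by
    rw [← Finset.add_sum_erase _ _ hr, Finset.mul_sum]
    congr 1
    · field_simp
    · apply Finset.sum_congr rfl
      intro p hp
      have hp0 : (p:ℚ) ≠ 0 := ne_of_gt (hpos p (Finset.mem_of_mem_erase hp))
      rw [hcast p hp]
      field_simp
  have keyQ : (s.count r : ℚ) * N + r * ∑ p ∈ S.erase r, (s.count p : ℚ) * ((N / p : ℕ) : ℚ)
      = (N:ℚ) * r := by rw [← e2, e1]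
  have keyN : s.count r * N + r * (∑ p ∈ S.erase r, s.count p * (N/p)) = N * r := by
    exact_mod_cast keyQ
  have hdvdZ : (r:ℤ) ∣ ((s.count r * N : ℕ) : ℤ) := by
    have hZ : ((s.count r * N : ℕ) : ℤ)
        = (N:ℤ) * r - r * ((∑ p ∈ S.erase r, s.count p * (N/p) : ℕ) : ℤ) := by
      have := keyN
      push_cast
      push_cast at this ⊢
      linarith [this]
    rw [hZ]
    exact dvd_sub (dvd_mul_left _ _) (Dvd.intro _ rfl)
  have hdvd : r ∣ s.count r * N := by exact_mod_cast hdvdZ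
  exact hcop.dvd_of_dvd_mul_right hdvd


lemma sum_reciprocals_eq_one (s : Multiset ℕ) (hs : ∀ p ∈ s, p.Prime)
    (h : (s.map (fun p : ℕ => (p:ℚ)⁻¹)).sum = 1) :
    ∃ r : ℕ, r.Prime ∧ s = Multiset.replicate r r := by
  classical
  have hsum : ∑ p ∈ s.toFinset, (s.count p : ℚ) * (p:ℚ)⁻¹ = 1 := by
    have := Finset.sum_multiset_map_count s (fun p : ℕ => (p:ℚ)⁻¹)
    rw [this] at h
    simpa [nsmul_eq_mul] using h
  have hne : s ≠ 0 := by
    rintro rfl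
    simp at h
  obtain ⟨r, hrs⟩ := Multiset.exists_mem_of_ne_zero hne
  have hrt : r ∈ s.toFinset := Multiset.mem_toFinset.mpr hrs
  -- every term is ≥ 1
  have hterm : ∀ p ∈ s.toFinset, (1:ℚ) ≤ (s.count p : ℚ) * (p:ℚ)⁻¹ := by
    intro p hp
    have hpp := hs p (Multiset.mem_toFinset.mp hp)
    have hp0 : (0:ℚ) < p := by exact_mod_cast hpp.pos
    have hd : p ∣ s.count p := count_dvd s hs h hp
    have hcpos : 0 < s.count p := Multiset.count_pos.mpr (Multiset.mem_toFinset.mp hp)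
    have hge : p ≤ s.count p := Nat.le_of_dvd hcpos hd
    rw [← div_eq_mul_inv, le_div_iff₀ hp0, one_mul]
    exact_mod_cast hge
  -- so toFinset has card ≤ 1
  have hcard : s.toFinset.card = 1 := by
    have hle : (s.toFinset.card : ℚ) ≤ 1 := by
      calc (s.toFinset.card : ℚ) = ∑ _p ∈ s.toFinset, (1:ℚ) := by simp
        _ ≤ ∑ p ∈ s.toFinset, (s.count p : ℚ) * (p:ℚ)⁻¹ := Finset.sum_le_sum hterm
        _ = 1 := hsum
    have : s.toFinset.card ≤ 1 := by exact_mod_cast hle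
    have : 0 < s.toFinset.card := Finset.card_pos.mpr ⟨r, hrt⟩
    omega
  have hsingle : s.toFinset = {r} := Finset.eq_singleton_iff_unique_mem.mpr
    ⟨hrt, fun x hx => by
      have := Finset.card_eq_one.mp hcard
      obtain ⟨a, ha⟩ := this
      rw [ha] at hx hrt
      simp at hx hrt
      rw [hx, hrt]⟩
  have hall : ∀ b ∈ s, b = r := by
    intro b hb
    have : b ∈ s.toFinset := Multiset.mem_toFinset.mpr hb
    rw [hsingle] at this
    simpa using this
  have hrep : s = Multiset.replicate (Multiset.card s) r :=
    Multiset.eq_replicate_card.mpr hall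
  have hrp : r.Prime := hs r hrs
  have hr0 : (r:ℚ) ≠ 0 := by exact_mod_cast hrp.pos.ne'
  have hcount : s.count r = Multiset.card s := by
    rw [hrep]; simp
  have : (Multiset.card s : ℚ) * (r:ℚ)⁻¹ = 1 := by
    rw [← hcount]
    rw [hsingle] at hsum
    simpa using hsum
  have hcr : (Multiset.card s : ℚ) = r := by
    field_simp at this
    exact_mod_cast this
  have : Multiset.card s = r := by exact_mod_cast hcr
  exact ⟨r, hrp, by rw [hrep, this]⟩


end NT

section Mside

lemma mem_M_iff {x : ℚ} : x ∈ primeReciprocalsMonoid ↔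
    ∃ s : Multiset ℕ, (∀ p ∈ s, p.Prime) ∧ x = (s.map (fun p : ℕ => (p:ℚ)⁻¹)).sum := by
  constructor
  · intro hx
    induction hx using AddSubmonoid.closure_induction with
    | mem y hy =>
      obtain ⟨p, hp, rfl⟩ := hy
      exact ⟨{p}, by simpa using hp, by simp [one_div]⟩
    | zero => exact ⟨0, by simp, by simp⟩
    | add y z _ _ hy hz =>
      obtain ⟨s, hs, rfl⟩ := hy
      obtain ⟨t, ht, rfl⟩ := hz
      refine ⟨s + t, ?_, by simp⟩
      intro p hp
      rcases Multiset.mem_add.mp hp with h | h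
      exacts [hs p h, ht p h]
  · rintro ⟨s, hs, rfl⟩
    induction s using Multiset.induction with
    | empty => simp [AddSubmonoid.zero_mem]
    | cons p t ih =>
      simp only [Multiset.map_cons, Multiset.sum_cons]
      apply AddSubmonoid.add_mem
      · exact AddSubmonoid.subset_closure ⟨p, hs p (Multiset.mem_cons_self p t),
          by rw [one_div]⟩
      · exact ih fun x hx => hs x (Multiset.mem_cons_of_mem hx)


lemma M_nonneg {x : ℚ} (hx : x ∈ primeReciprocalsMonoid) : 0 ≤ x := by
  obtain ⟨s, hs, rfl⟩ := mem_M_iff.mp hx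
  apply Multiset.sum_nonneg
  intro a ha
  obtain ⟨p, hp, rfl⟩ := Multiset.mem_map.mp ha
  positivity


lemma repr_ne_zero {x : ℚ} {s : Multiset ℕ} (hs : ∀ p ∈ s, p.Prime)
    (hx : x = (s.map (fun p : ℕ => (p:ℚ)⁻¹)).sum) (h0 : x ≠ 0) : s ≠ 0 := by
  rintro rfl
  simp at hx
  exact h0 hx


lemma recip_sum_pos {s : Multiset ℕ} (hs : ∀ p ∈ s, p.Prime) (h0 : s ≠ 0) :
    0 < (s.map (fun p : ℕ => (p:ℚ)⁻¹)).sum := by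
  obtain ⟨p, hps⟩ := Multiset.exists_mem_of_ne_zero h0
  obtain ⟨t, rfl⟩ := Multiset.exists_cons_of_mem hps
  rw [Multiset.map_cons, Multiset.sum_cons]
  have h1 : (0:ℚ) < (p:ℚ)⁻¹ := by
    have := (hs p (Multiset.mem_cons_self p t)).pos
    positivity
  have h2 : (0:ℚ) ≤ (t.map (fun p : ℕ => (p:ℚ)⁻¹)).sum := by
    apply Multiset.sum_nonneg
    intro a ha
    obtain ⟨x, hx, rfl⟩ := Multiset.mem_map.mp ha
    positivity
  linarith

lemma atom_pair {p : ℕ} (hp : p.Prime) {a b : ℚ} (ha : a ∈ primeReciprocalsMonoid)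
    (hb : b ∈ primeReciprocalsMonoid) (hab : a + b = (p:ℚ)⁻¹) : a = 0 ∨ b = 0 := by
  by_contra hcon
  push_neg at hcon
  obtain ⟨s, hs, rfl⟩ := mem_M_iff.mp ha
  obtain ⟨t, ht, rfl⟩ := mem_M_iff.mp hb
  have hs0 : s ≠ 0 := repr_ne_zero hs rfl hcon.1
  have ht0 : t ≠ 0 := repr_ne_zero ht rfl hcon.2
  have hp0 : (p:ℚ) ≠ 0 := by exact_mod_cast hp.pos.ne'
  have hprimes : ∀ x ∈ p • (s + t), x.Prime := by
    intro x hx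
    rw [Multiset.mem_nsmul] at hx
    rcases Multiset.mem_add.mp hx.2 with h | h
    exacts [hs x h, ht x h]
  have hsum : ((p • (s + t)).map (fun p : ℕ => (p:ℚ)⁻¹)).sum = 1 := by
    rw [Multiset.map_nsmul, Multiset.sum_nsmul, Multiset.map_add, Multiset.sum_add, hab,
      nsmul_eq_mul]
    field_simp
  obtain ⟨r, hrp, hrep⟩ := sum_reciprocals_eq_one _ hprimes hsum
  have hcard : p * Multiset.card s + p * Multiset.card t = r := by
    have := congrArg Multiset.card hrep
    simpa using this
  have h2s : 0 < Multiset.card s := Multiset.card_pos.mpr hs0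
  have h2t : 0 < Multiset.card t := Multiset.card_pos.mpr ht0
  have hcard' : p * (Multiset.card s + Multiset.card t) = r := by rw [Nat.mul_add]; exact hcard
  rcases (Nat.Prime.eq_one_or_self_of_dvd hrp p ⟨_, hcard'.symm⟩) with h | h
  · exact hp.one_lt.ne' h
  · have hp2 := hp.two_le
    have hA : p * 1 ≤ p * Multiset.card s := Nat.mul_le_mul_left p h2s
    have hB : p * 1 ≤ p * Multiset.card t := Nat.mul_le_mul_left p h2t
    rw [mul_one] at hA hB
    omega

end Mside

section Algebra

open AddMonoidAlgebra

variable {q : ℕ} [Fact q.Prime]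

abbrev Alg (q : ℕ) := AddMonoidAlgebra (ZMod q) primeReciprocalsMonoid

lemma mul_eq_single {f g : Alg q} {m : primeReciprocalsMonoid} {c : ZMod q}
    (hc : c ≠ 0) (h : f * g = AddMonoidAlgebra.single m c) :
    ∃ (a b : primeReciprocalsMonoid) (u v : ZMod q), u ≠ 0 ∧ v ≠ 0 ∧ a + b = m ∧ u * v = c ∧
      f = AddMonoidAlgebra.single a u ∧ g = AddMonoidAlgebra.single b v := by
  classical
  have hf : f ≠ 0 := by rintro rfl; rw [zero_mul] at h; exact hc (by simpa using (AddMonoidAlgebra.single_eq_zero.mp h.symm))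
  have hg : g ≠ 0 := by rintro rfl; rw [mul_zero] at h; exact hc (by simpa using (AddMonoidAlgebra.single_eq_zero.mp h.symm))
  have hfs : f.coeff.support.Nonempty := Finsupp.support_nonempty_iff.mpr (mt AddMonoidAlgebra.coeff_eq_zero.mp hf)
  have hgs : g.coeff.support.Nonempty := Finsupp.support_nonempty_iff.mpr (mt AddMonoidAlgebra.coeff_eq_zero.mp hg)
  set af := f.coeff.support.max' hfs with haf
  set ag := g.coeff.support.max' hgs with hag
  set bf := f.coeff.support.min' hfs with hbf
  set bg := g.coeff.support.min' hgs with hbg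
  have humax : UniqueAdd f.coeff.support g.coeff.support af ag := by
    intro a b ha hb heq
    have h1 : (a:ℚ) ≤ (af:ℚ) := Finset.le_max' _ a ha
    have h2 : (b:ℚ) ≤ (ag:ℚ) := Finset.le_max' _ b hb
    have h3 : (a:ℚ) + (b:ℚ) = (af:ℚ) + (ag:ℚ) := by exact_mod_cast congrArg (Subtype.val) heq
    constructor <;> [skip; skip] <;> apply Subtype.ext <;> linarith
  have humin : UniqueAdd f.coeff.support g.coeff.support bf bg := by
    intro a b ha hb heq
    have h1 : (bf:ℚ) ≤ (a:ℚ) := Finset.min'_le _ a ha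
    have h2 : (bg:ℚ) ≤ (b:ℚ) := Finset.min'_le _ b hb
    have h3 : (a:ℚ) + (b:ℚ) = (bf:ℚ) + (bg:ℚ) := by exact_mod_cast congrArg (Subtype.val) heq
    constructor <;> apply Subtype.ext <;> linarith
  have hmax := AddMonoidAlgebra.coeff_mul_add_of_uniqueAdd (R := ZMod q) humax
  have hmin := AddMonoidAlgebra.coeff_mul_add_of_uniqueAdd (R := ZMod q) humin
  have hfa : f.coeff af ≠ 0 := Finsupp.mem_support_iff.mp (f.coeff.support.max'_mem hfs)
  have hga : g.coeff ag ≠ 0 := Finsupp.mem_support_iff.mp (g.coeff.support.max'_mem hgs)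
  have hfb : f.coeff bf ≠ 0 := Finsupp.mem_support_iff.mp (f.coeff.support.min'_mem hfs)
  have hgb : g.coeff bg ≠ 0 := Finsupp.mem_support_iff.mp (g.coeff.support.min'_mem hgs)
  have hmaxm : af + ag = m := by
    by_contra hne
    rw [h, AddMonoidAlgebra.coeff_single, Finsupp.single_apply, if_neg (fun hh => hne hh.symm)] at hmax
    exact mul_ne_zero hfa hga hmax.symm
  have hminm : bf + bg = m := by
    by_contra hne
    rw [h, AddMonoidAlgebra.coeff_single, Finsupp.single_apply, if_neg (fun hh => hne hh.symm)] at hmin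
    exact mul_ne_zero hfb hgb hmin.symm
  have heq : (bf:ℚ) + (bg:ℚ) = (af:ℚ) + (ag:ℚ) := by
    have : bf + bg = af + ag := hminm.trans hmaxm.symm
    exact_mod_cast congrArg Subtype.val this
  have hle1 : (bf:ℚ) ≤ af := Finset.min'_le _ _ (f.coeff.support.max'_mem hfs)
  have hle2 : (bg:ℚ) ≤ ag := Finset.min'_le _ _ (g.coeff.support.max'_mem hgs)
  have hbfaf : bf = af := Subtype.ext (by linarith)
  have hbgag : bg = ag := Subtype.ext (by linarith)
  have hfsupp : f.coeff.support = {af} := by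
    apply Finset.eq_singleton_iff_unique_mem.mpr
    refine ⟨f.coeff.support.max'_mem hfs, fun x hx => ?_⟩
    have l1 : (bf:ℚ) ≤ x := Finset.min'_le _ x hx
    have l2 : (x:ℚ) ≤ af := Finset.le_max' _ x hx
    have : (bf:ℚ) = af := congrArg Subtype.val hbfaf
    exact Subtype.ext (by linarith)
  have hgsupp : g.coeff.support = {ag} := by
    apply Finset.eq_singleton_iff_unique_mem.mpr
    refine ⟨g.coeff.support.max'_mem hgs, fun x hx => ?_⟩
    have l1 : (bg:ℚ) ≤ x := Finset.min'_le _ x hx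
    have l2 : (x:ℚ) ≤ ag := Finset.le_max' _ x hx
    have : (bg:ℚ) = ag := congrArg Subtype.val hbgag
    exact Subtype.ext (by linarith)
  have hfeq : f = AddMonoidAlgebra.single af (f.coeff af) :=
    AddMonoidAlgebra.coeff_injective (Finsupp.support_eq_singleton.mp hfsupp).2
  have hgeq : g = AddMonoidAlgebra.single ag (g.coeff ag) :=
    AddMonoidAlgebra.coeff_injective (Finsupp.support_eq_singleton.mp hgsupp).2
  refine ⟨af, ag, f.coeff af, g.coeff ag, hfa, hga, hmaxm, ?_, hfeq, hgeq⟩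
  rw [← hmax, h, hmaxm, AddMonoidAlgebra.coeff_single, Finsupp.single_apply, if_pos rfl]


lemma isUnit_single_zero {u : ZMod q} (hu : u ≠ 0) :
    IsUnit (AddMonoidAlgebra.single (0 : primeReciprocalsMonoid) u : Alg q) := by
  refine isUnit_iff_exists_inv.mpr ⟨AddMonoidAlgebra.single 0 u⁻¹, ?_⟩
  rw [AddMonoidAlgebra.single_mul_single, AddMonoidAlgebra.one_def]
  rw [mul_inv_cancel₀ hu, add_zero]

lemma not_isUnit_single {m : primeReciprocalsMonoid} (hm : m ≠ 0) (c : ZMod q) :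
    ¬ IsUnit (AddMonoidAlgebra.single m c : Alg q) := by
  rcases eq_or_ne c 0 with rfl | hc
  · rw [AddMonoidAlgebra.single_zero]
    exact not_isUnit_zero
  intro hunit
  obtain ⟨v, hv⟩ := isUnit_iff_exists_inv.mp hunit
  rw [AddMonoidAlgebra.one_def] at hv
  obtain ⟨a, b, u, w, hu, hw, hab, -, hf, -⟩ := mul_eq_single one_ne_zero hv
  have hma : m = a := by
    by_contra hne
    have h2 : (AddMonoidAlgebra.single m c : Alg q).coeff a = (AddMonoidAlgebra.single a u).coeff a := by
      rw [hf]
    simp only [AddMonoidAlgebra.coeff_single] at h2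
    rw [Finsupp.single_apply, if_neg hne, Finsupp.single_apply, if_pos rfl] at h2
    exact hu h2.symm
  have hab' : (a:ℚ) + (b:ℚ) = 0 := by
    rw [← AddSubmonoid.coe_add]
    exact congrArg Subtype.val hab
  have ha0 : (a:ℚ) = 0 := le_antisymm (by linarith [M_nonneg b.2]) (M_nonneg a.2)
  exact hm (by rw [hma]; exact Subtype.ext ha0)

lemma prod_eq_single (l : Multiset (Alg q)) :
    ∀ {m : primeReciprocalsMonoid} {c : ZMod q}, c ≠ 0 →
    l.prod = AddMonoidAlgebra.single m c →
    ∃ s : Multiset primeReciprocalsMonoid, s.sum = m ∧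
      Multiset.card s = Multiset.card l ∧
      ∀ a ∈ s, ∃ u : ZMod q, u ≠ 0 ∧ AddMonoidAlgebra.single a u ∈ l := by
  induction l using Multiset.induction with
  | empty =>
    intro m c hc h
    rw [Multiset.prod_zero, AddMonoidAlgebra.one_def] at h
    have hm : (0 : primeReciprocalsMonoid) = m := by
      by_contra hne
      have h2 : (AddMonoidAlgebra.single (0:primeReciprocalsMonoid) (1:ZMod q) : Alg q).coeff 0
          = (AddMonoidAlgebra.single m c).coeff 0 := by rw [h]
      simp only [AddMonoidAlgebra.coeff_single] at h2
      rw [Finsupp.single_apply, if_pos rfl, Finsupp.single_apply, if_neg (fun hh : m = 0 => hne hh.symm)] at h2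
      exact one_ne_zero h2
    exact ⟨0, by simpa using hm, by simp, by simp⟩
  | cons y l ih =>
    intro m c hc h
    rw [Multiset.prod_cons] at h
    obtain ⟨a, b, u, v, hu, hv, hab, -, hy, hl⟩ := mul_eq_single hc h
    obtain ⟨s, hsum, hcard, hmem⟩ := ih hv hl
    refine ⟨a ::ₘ s, by rw [Multiset.sum_cons, hsum, hab], by simp [hcard], ?_⟩
    intro x hx
    rcases Multiset.mem_cons.mp hx with rfl | hx
    · exact ⟨u, hu, by rw [← hy]; exact Multiset.mem_cons_self y l⟩
    · obtain ⟨w, hw, hwl⟩ := hmem x hx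
      exact ⟨w, hw, Multiset.mem_cons_of_mem hwl⟩

lemma irreducible_single_exp {a : primeReciprocalsMonoid} {u : ZMod q}
    (h : Irreducible (AddMonoidAlgebra.single a u : Alg q)) :
    ∃ p : ℕ, p.Prime ∧ (a:ℚ) = (p:ℚ)⁻¹ := by
  have hu : u ≠ 0 := by
    rintro rfl
    rw [AddMonoidAlgebra.single_zero] at h
    exact h.ne_zero rfl
  have ha0 : a ≠ 0 := by
    rintro rfl
    exact h.not_isUnit (isUnit_single_zero hu)
  obtain ⟨s, hs, hrep⟩ := mem_M_iff.mp a.2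
  have hs0 : s ≠ 0 := repr_ne_zero hs hrep (fun hh => ha0 (Subtype.ext hh))
  obtain ⟨p, hps⟩ := Multiset.exists_mem_of_ne_zero hs0
  obtain ⟨t, rfl⟩ := Multiset.exists_cons_of_mem hps
  have hpp : p.Prime := hs p (Multiset.mem_cons_self p t)
  rcases eq_or_ne t 0 with rfl | ht0
  · exact ⟨p, hpp, by simpa using hrep⟩
  exfalso
  have htp : ∀ x ∈ t, x.Prime := fun x hx => hs x (Multiset.mem_cons_of_mem hx)
  have hb1 : ((p:ℚ)⁻¹) ∈ primeReciprocalsMonoid :=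
    mem_M_iff.mpr ⟨{p}, by simpa using hpp, by simp⟩
  have hb2 : ((t.map (fun p : ℕ => (p:ℚ)⁻¹)).sum) ∈ primeReciprocalsMonoid :=
    mem_M_iff.mpr ⟨t, htp, rfl⟩
  set b1 : primeReciprocalsMonoid := ⟨_, hb1⟩
  set b2 : primeReciprocalsMonoid := ⟨_, hb2⟩
  have hsplit : (AddMonoidAlgebra.single a u : Alg q)
      = AddMonoidAlgebra.single b1 u * AddMonoidAlgebra.single b2 1 := by
    rw [AddMonoidAlgebra.single_mul_single, mul_one]
    congr 1
    apply Subtype.ext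
    rw [hrep]
    simp [b1, b2, AddSubmonoid.coe_add]
  rcases h.isUnit_or_isUnit hsplit with hun | hun
  · refine not_isUnit_single ?_ _ hun
    intro hh
    have hc : (p:ℚ)⁻¹ = 0 := congrArg Subtype.val hh
    exact inv_ne_zero (Nat.cast_ne_zero.mpr hpp.pos.ne') hc
  · refine not_isUnit_single ?_ _ hun
    intro hh
    have h2 := congrArg Subtype.val hh
    have hpos := recip_sum_pos htp ht0
    simp only [b2] at h2
    rw [show ((0 : primeReciprocalsMonoid) : ℚ) = 0 from rfl] at h2
    linarith [hpos, h2.ge]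

lemma irreducible_single_recip {p : ℕ} (hp : p.Prime)
    (hm : ((p:ℚ)⁻¹) ∈ primeReciprocalsMonoid) {u : ZMod q} (hu : u ≠ 0) :
    Irreducible (AddMonoidAlgebra.single (⟨_, hm⟩ : primeReciprocalsMonoid) u : Alg q) := by
  constructor
  · apply not_isUnit_single
    intro hh
    have hc : (p:ℚ)⁻¹ = 0 := congrArg Subtype.val hh
    exact inv_ne_zero (Nat.cast_ne_zero.mpr hp.pos.ne') hc
  · intro f g hfg
    obtain ⟨a, b, w, v, hw, hv, hab, -, hf, hg⟩ := mul_eq_single hu hfg.symm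
    have hab' : (a:ℚ) + (b:ℚ) = (p:ℚ)⁻¹ := by
      rw [← AddSubmonoid.coe_add]
      exact congrArg Subtype.val hab
    rcases atom_pair hp a.2 b.2 hab' with h0 | h0
    · left
      rw [hf, show a = 0 from Subtype.ext h0]
      exact isUnit_single_zero hw
    · right
      rw [hg, show b = 0 from Subtype.ext h0]
      exact isUnit_single_zero hv

end Algebra

lemma exists_prime_multiset (s : Multiset ℚ)
    (h : ∀ a ∈ s, ∃ p : ℕ, p.Prime ∧ a = (p:ℚ)⁻¹) :
    ∃ t : Multiset ℕ, (∀ p ∈ t, p.Prime) ∧ Multiset.card t = Multiset.card s ∧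
      (t.map (fun p : ℕ => (p:ℚ)⁻¹)).sum = s.sum := by
  induction s using Multiset.induction with
  | empty => exact ⟨0, by simp, by simp, by simp⟩
  | cons a s ih =>
    obtain ⟨t, ht, hcard, hsum⟩ := ih (fun x hx => h x (Multiset.mem_cons_of_mem hx))
    obtain ⟨p, hp, rfl⟩ := h a (Multiset.mem_cons_self a s)
    refine ⟨p ::ₘ t, ?_, by simp [hcard], by simp [hsum]⟩
    intro x hx
    rcases Multiset.mem_cons.mp hx with rfl | hx
    exacts [hp, ht x hx]

/-- Let `M` be the submonoid of `(ℚ, +)` generated by `{1/p : p prime}`,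
`q` a prime, and `x` the monomial of exponent `1` in `𝔽_q[M]`. Then the set of factorization
lengths of `x` is exactly the set of primes; in particular `𝔽_q[M]` is not a bounded
factorization domain. -/
theorem prime_reciprocals_monoid_algebra_not_BFD (q : ℕ) (hq : q.Prime)
    (h1 : (1 : ℚ) ∈ primeReciprocalsMonoid) :
    ({n : ℕ | ∃ l : Multiset (AddMonoidAlgebra (ZMod q) primeReciprocalsMonoid),
        Multiset.card l = n ∧ (∀ y ∈ l, Irreducible y) ∧
        l.prod = AddMonoidAlgebra.single (⟨1, h1⟩ : primeReciprocalsMonoid) (1 : ZMod q)}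
      = {n : ℕ | n.Prime}) ∧
    ¬ (AtomicDomain (AddMonoidAlgebra (ZMod q) primeReciprocalsMonoid) ∧
        ∀ a : AddMonoidAlgebra (ZMod q) primeReciprocalsMonoid, a ≠ 0 → ¬ IsUnit a →
          Set.Finite {n : ℕ | ∃ l : Multiset (AddMonoidAlgebra (ZMod q) primeReciprocalsMonoid),
            Multiset.card l = n ∧ (∀ y ∈ l, Irreducible y) ∧ l.prod = a}) := by
  haveI : Fact q.Prime := ⟨hq⟩
  have hmain : {n : ℕ | ∃ l : Multiset (AddMonoidAlgebra (ZMod q) primeReciprocalsMonoid),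
        Multiset.card l = n ∧ (∀ y ∈ l, Irreducible y) ∧
        l.prod = AddMonoidAlgebra.single (⟨1, h1⟩ : primeReciprocalsMonoid) (1 : ZMod q)}
      = {n : ℕ | n.Prime} := by
    ext n
    simp only [Set.mem_setOf_eq]
    constructor
    · rintro ⟨l, hcard, hirr, hprod⟩
      obtain ⟨s, hsum, hscard, hmem⟩ := prod_eq_single l one_ne_zero hprod
      have hforall : ∀ x ∈ s.map (Subtype.val), ∃ p : ℕ, p.Prime ∧ x = (p:ℚ)⁻¹ := by
        intro x hx
        obtain ⟨a, ha, rfl⟩ := Multiset.mem_map.mp hx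
        obtain ⟨u, hu, hul⟩ := hmem a ha
        exact irreducible_single_exp (hirr _ hul)
      obtain ⟨t, htp, htcard, htsum⟩ := exists_prime_multiset _ hforall
      have hsum1 : (t.map (fun p : ℕ => (p:ℚ)⁻¹)).sum = 1 := by
        rw [htsum]
        have hcoe : (s.map (Subtype.val)).sum = ((s.sum : primeReciprocalsMonoid) : ℚ) := by
          simpa using (map_multiset_sum (primeReciprocalsMonoid.subtype) s).symm
        rw [hcoe, hsum]
      obtain ⟨r, hrp, hrep⟩ := sum_reciprocals_eq_one t htp hsum1
      have : Multiset.card t = r := by rw [hrep]; simp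
      have : n = r := by
        rw [← hcard, ← hscard]
        rw [← this, htcard]
        simp
      rw [this]; exact hrp
    · intro hn
      have hm : ((n:ℚ)⁻¹) ∈ primeReciprocalsMonoid :=
        mem_M_iff.mpr ⟨{n}, by simpa using hn, by simp⟩
      refine ⟨Multiset.replicate n (AddMonoidAlgebra.single (⟨_, hm⟩ : primeReciprocalsMonoid) 1),
        by simp, ?_, ?_⟩
      · intro y hy
        rw [Multiset.eq_of_mem_replicate hy]
        exact irreducible_single_recip hn hm one_ne_zero
      · rw [Multiset.prod_replicate, AddMonoidAlgebra.single_pow, one_pow]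
        congr 1
        apply Subtype.ext
        have : ((n • (⟨_, hm⟩ : primeReciprocalsMonoid) : primeReciprocalsMonoid) : ℚ)
            = n • ((n:ℚ)⁻¹) :=
          AddMonoidHom.map_nsmul (primeReciprocalsMonoid.subtype) _ _
        rw [this, nsmul_eq_mul]
        exact mul_inv_cancel₀ (Nat.cast_ne_zero.mpr hn.pos.ne')
  refine ⟨hmain, ?_⟩
  rintro ⟨-, hfin⟩
  have hx0 : (AddMonoidAlgebra.single (⟨1, h1⟩ : primeReciprocalsMonoid) (1 : ZMod q)
      : AddMonoidAlgebra (ZMod q) primeReciprocalsMonoid) ≠ 0 :=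
    by
    intro hh
    have := congrArg (fun z : AddMonoidAlgebra (ZMod q) primeReciprocalsMonoid =>
      z.coeff (⟨1, h1⟩ : primeReciprocalsMonoid)) hh
    simp [Finsupp.single_apply] at this
  have hxu : ¬ IsUnit (AddMonoidAlgebra.single (⟨1, h1⟩ : primeReciprocalsMonoid) (1 : ZMod q)
      : AddMonoidAlgebra (ZMod q) primeReciprocalsMonoid) := by
    apply not_isUnit_single
    intro hh
    have := congrArg Subtype.val hh
    norm_num at this
  have := hfin _ hx0 hxu
  rw [hmain] at this
  exact Nat.infinite_setOf_prime this
end
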